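/- Let G be a finite directed multigraph with e edges and v vertices such that every strongly connected component has at least 2 vertices and no strongly connected component consists only of vertices of outdegree 1. Then repeatedly contracting an outdegree-1 vertex (removing one vertex and one edge each time) terminates in a graph G' with e' edges and v' vertices satisfying e' ≥ 2v' and e' − v' = e − v; consequently e' ≤ 2(e − v). -/

import Mathlib

/-- A finite directed multigraph. -/
structure MG where
  V : Type
  E : Type
  [fV : Fintype V]
  [fE : Fintype E]
  src : E → V
  tgt : E → V

attribute [instance] MG.fV MG.fE

/-- Reachability by a directed path (length 0 allowed). -/
def MG.Reach (G : MG) : G.V → G.V → Prop :=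
  Relation.ReflTransGen (fun a b => ∃ e, G.src e = a ∧ G.tgt e = b)

/-- The outdegree of a vertex. -/
noncomputable def MG.outdeg (G : MG) (u : G.V) : ℕ :=
  Set.ncard {e : G.E | G.src e = u}

/-- `G'` is obtained from `G` by contracting an outdegree-1 vertex `u`:
the unique edge `e₀` leaving `u` (going to `v0 ≠ u`) is deleted, every edge
ending at `u` is redirected to end at `v0`, and `u` is deleted.  This removes
exactly one vertex and one edge. -/
def IsContraction (G G' : MG) : Prop :=
  ∃ (u v0 : G.V) (e₀ : G.E), v0 ≠ u ∧ G.src e₀ = u ∧ G.tgt e₀ = v0 ∧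
    (∀ e, G.src e = u → e = e₀) ∧
    ∃ (eV : G'.V ≃ {w : G.V // w ≠ u}) (eE : G'.E ≃ {e : G.E // e ≠ e₀}),
      (∀ e', (eV (G'.src e')).val = G.src (eE e').val) ∧
      (∀ e', (G.tgt (eE e').val = u ∧ (eV (G'.tgt e')).val = v0) ∨
             (G.tgt (eE e').val ≠ u ∧ (eV (G'.tgt e')).val = G.tgt (eE e').val))

attribute [local instance] Classical.propDecidable

lemma MG.outdeg_eq (G : MG) (u : G.V) :
    G.outdeg u = (Finset.univ.filter (fun e => G.src e = u)).card := by
  rw [MG.outdeg, ← Set.ncard_coe_finset]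
  congr 1
  ext e
  simp

lemma MG.card_eq_sum_outdeg (G : MG) :
    Fintype.card G.E = ∑ w : G.V, G.outdeg w := by
  simp only [MG.outdeg_eq]
  rw [← Finset.card_univ]
  exact Finset.card_eq_sum_card_fiberwise (fun e _ => Finset.mem_univ (G.src e))

lemma card_subtype_ne {α : Type} [Fintype α] (u : α) :
    Fintype.card {w : α // w ≠ u} = Fintype.card α - 1 := by
  have := Fintype.card_subtype_compl (fun w : α => w = u)
  rw [Fintype.card_subtype_eq] at this
  convert this using 2

noncomputable def MG.contract (G : MG) (u v0 : G.V) (e₀ : G.E) (hv : v0 ≠ u)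
    (huniq : ∀ e, G.src e = u → e = e₀) : MG where
  V := {w : G.V // w ≠ u}
  E := {e : G.E // e ≠ e₀}
  src := fun e => ⟨G.src e.1, fun h => e.2 (huniq e.1 h)⟩
  tgt := fun e => if h : G.tgt e.1 = u then ⟨v0, hv⟩ else ⟨G.tgt e.1, h⟩

section
variable (G : MG) (u v0 : G.V) (e₀ : G.E) (hv : v0 ≠ u) (hs : G.src e₀ = u)
  (htg : G.tgt e₀ = v0) (huniq : ∀ e, G.src e = u → e = e₀)

include hs htg in
lemma contract_isContraction : IsContraction G (G.contract u v0 e₀ hv huniq) := by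
  refine ⟨u, v0, e₀, hv, hs, htg, huniq, Equiv.refl _, Equiv.refl _, fun e' => rfl, fun e' => ?_⟩
  by_cases h : G.tgt e'.1 = u
  · left
    refine ⟨h, ?_⟩
    show ((G.contract u v0 e₀ hv huniq).tgt e').val = v0
    simp [MG.contract, h]
  · right
    refine ⟨h, ?_⟩
    show ((G.contract u v0 e₀ hv huniq).tgt e').val = G.tgt e'.1
    simp [MG.contract, h]

include hs in
lemma contract_outdeg (w : G.V) (hw : w ≠ u) :
    (G.contract u v0 e₀ hv huniq).outdeg ⟨w, hw⟩ = G.outdeg w := by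
  unfold MG.outdeg
  show Set.ncard {e : {e : G.E // e ≠ e₀} |
    (⟨G.src e.1, fun h => e.2 (huniq e.1 h)⟩ : {w : G.V // w ≠ u}) = ⟨w, hw⟩} = _
  rw [← Set.ncard_image_of_injective _ (Subtype.val_injective
    (p := fun e => e ≠ e₀))]
  congr 1
  ext e
  simp only [Set.mem_image, Set.mem_setOf_eq]
  constructor
  · rintro ⟨e', he', rfl⟩
    exact congrArg Subtype.val he'
  · intro he
    have hne : e ≠ e₀ := fun h => hw (by rw [← he, h, hs])
    exact ⟨⟨e, hne⟩, Subtype.ext he, rfl⟩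

/-- projection map -/
noncomputable def proj (w : G.V) : {w : G.V // w ≠ u} :=
  if h : w = u then ⟨v0, hv⟩ else ⟨w, h⟩

include hs htg in
lemma contract_reach {a b : G.V} (h : G.Reach a b) :
    (G.contract u v0 e₀ hv huniq).Reach (proj G u v0 hv a) (proj G u v0 hv b) := by
  induction h with
  | refl => exact Relation.ReflTransGen.refl
  | tail hab hbc ih =>
    rename_i c d
    obtain ⟨e, hsrc, htgt⟩ := hbc
    by_cases he : e = e₀
    · subst he
      have hc : c = u := by rw [← hsrc, hs]
      have hd : d = v0 := by rw [← htgt, htg]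
      have : proj G u v0 hv c = proj G u v0 hv d := by
        subst hc hd
        simp [proj, hv]
      rwa [← this]
    · refine ih.tail ⟨⟨e, he⟩, ?_, ?_⟩
      · have hcu : c ≠ u := fun h => he (huniq e (by rw [hsrc, h]))
        show (⟨G.src e, _⟩ : {w : G.V // w ≠ u}) = proj G u v0 hv c
        simp [proj, hcu, hsrc]
      · show (if h : G.tgt e = u then (⟨v0, hv⟩:{w : G.V // w ≠ u}) else ⟨G.tgt e, h⟩) = proj G u v0 hv d
        by_cases hd : G.tgt e = u
        · have : d = u := htgt ▸ hd
          simp [proj, hd, this]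
        · have : d ≠ u := htgt ▸ hd
          simp [proj, hd, this, htgt]

include hs huniq in
lemma outdeg_u_eq_one : G.outdeg u = 1 := by
  unfold MG.outdeg
  rw [Set.ncard_eq_one]
  exact ⟨e₀, Set.eq_singleton_iff_unique_mem.mpr ⟨hs, fun e he => huniq e he⟩⟩

include hs huniq in
lemma reach_from_u_of_loop (hloop : G.tgt e₀ = u) :
    ∀ x, G.Reach u x → x = u := by
  intro x hx
  induction hx with
  | refl => rfl
  | tail hab hbc ih =>
    obtain ⟨e, hsrc, htgt⟩ := hbc
    have : e = e₀ := huniq e (by rw [hsrc, ih])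
    rw [← htgt, this, hloop]

end

lemma aux_main : ∀ (N : ℕ) (G : MG), Fintype.card G.V ≤ N →
    (∀ w : G.V, 1 ≤ G.outdeg w) →
    (∀ w : G.V, ∃ w', G.Reach w w' ∧ G.Reach w' w ∧ G.outdeg w' ≠ 1) →
    ∃ (n : ℕ) (seq : ℕ → MG), seq 0 = G ∧
      (∀ i < n, IsContraction (seq i) (seq (i + 1))) ∧
      2 * Fintype.card (seq n).V ≤ Fintype.card (seq n).E ∧
      Fintype.card (seq n).E - Fintype.card (seq n).V
        = Fintype.card G.E - Fintype.card G.V ∧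
      Fintype.card (seq n).E ≤ 2 * (Fintype.card G.E - Fintype.card G.V) := by
  intro N
  induction N with
  | zero =>
    intro G hN h1 h2
    have hv0 : Fintype.card G.V = 0 := by omega
    have hE0 : Fintype.card G.E = 0 := by
      rw [Fintype.card_eq_zero_iff] at hv0 ⊢
      exact ⟨fun e => hv0.false (G.src e)⟩
    refine ⟨0, fun _ => G, rfl, fun i hi => absurd hi (by omega), ?_, rfl, ?_⟩
    · show 2 * Fintype.card G.V ≤ Fintype.card G.E
      omega
    · show Fintype.card G.E ≤ 2 * (Fintype.card G.E - Fintype.card G.V)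
      omega
  | succ N ih =>
    intro G hN h1 h2
    by_cases hex : ∃ u : G.V, G.outdeg u = 1
    · obtain ⟨u, hu⟩ := hex
      -- extract the unique edge out of u
      obtain ⟨e₀, he₀⟩ := Set.ncard_eq_one.mp hu
      have hs : G.src e₀ = u := by
        have : e₀ ∈ {e : G.E | G.src e = u} := he₀ ▸ rfl
        exact this
      have huniq : ∀ e, G.src e = u → e = e₀ := fun e he => by
        have : e ∈ {e : G.E | G.src e = u} := he
        rwa [he₀] at this
      set v0 := G.tgt e₀ with hv0def
      have hv : v0 ≠ u := by
        intro hloop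
        obtain ⟨x, hx1, _, hx3⟩ := h2 u
        have := reach_from_u_of_loop G u e₀ hs huniq hloop x hx1
        rw [this] at hx3
        exact hx3 hu
      set G' := G.contract u v0 e₀ hv huniq with hG'
      have hcontr : IsContraction G G' :=
        contract_isContraction G u v0 e₀ hv hs rfl huniq
      -- invariants for G'
      have hG'V : Fintype.card G'.V = Fintype.card G.V - 1 := card_subtype_ne u
      have hG'E : Fintype.card G'.E = Fintype.card G.E - 1 := card_subtype_ne e₀
      have hVpos : 1 ≤ Fintype.card G.V := Fintype.card_pos_iff.mpr ⟨u⟩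
      have hEpos : 1 ≤ Fintype.card G.E := Fintype.card_pos_iff.mpr ⟨e₀⟩
      have h1' : ∀ w : G'.V, 1 ≤ G'.outdeg w := by
        intro w
        have : G'.outdeg ⟨w.1, w.2⟩ = G.outdeg w.1 :=
          contract_outdeg G u v0 e₀ hv hs huniq w.1 w.2
        rw [show w = ⟨w.1, w.2⟩ from rfl, this]
        exact h1 w.1
      have h2' : ∀ w : G'.V, ∃ w', G'.Reach w w' ∧ G'.Reach w' w ∧ G'.outdeg w' ≠ 1 := by
        intro w
        obtain ⟨x, hx1, hx2, hx3⟩ := h2 w.1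
        have hxu : x ≠ u := fun h => hx3 (h ▸ hu)
        refine ⟨proj G u v0 hv x, ?_, ?_, ?_⟩
        · have := contract_reach G u v0 e₀ hv hs rfl huniq hx1
          have hpw : proj G u v0 hv w.1 = w := by
            simp [proj, w.2]
            rfl
          rwa [hpw] at this
        · have := contract_reach G u v0 e₀ hv hs rfl huniq hx2
          have hpw : proj G u v0 hv w.1 = w := by
            simp [proj, w.2]
            rfl
          rwa [hpw] at this
        · have hpx : proj G u v0 hv x = ⟨x, hxu⟩ := by simp [proj, hxu]
          rw [hpx, contract_outdeg G u v0 e₀ hv hs huniq x hxu]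
          exact hx3
      have hN' : Fintype.card G'.V ≤ N := by omega
      obtain ⟨n, seq, hseq0, hseqc, hfin1, hfin2, hfin3⟩ := ih G' hN' h1' h2'
      refine ⟨n + 1, fun i => if i = 0 then G else seq (i - 1), rfl, ?_, ?_, ?_, ?_⟩
      · intro i hi
        rcases Nat.eq_zero_or_pos i with h0 | h0
        · subst h0
          simpa [hseq0] using hcontr
        · have : i ≠ 0 := by omega
          have h1i : i + 1 ≠ 0 := by omega
          simp only [this, h1i, if_false]
          have : i - 1 + 1 = i := by omega
          rw [← this]
          exact hseqc (i - 1) (by omega)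
      · simpa using hfin1
      · simp only [Nat.add_eq_zero, one_ne_zero, and_false, if_false,
          Nat.add_sub_cancel]
        omega
      · simp only [Nat.add_eq_zero, one_ne_zero, and_false, if_false,
          Nat.add_sub_cancel]
        omega
    · -- no vertex of outdegree 1: every vertex has outdegree ≥ 2
      push_neg at hex
      have h2deg : ∀ w : G.V, 2 ≤ G.outdeg w := fun w => by
        have := h1 w
        have := hex w
        omega
      have hE : 2 * Fintype.card G.V ≤ Fintype.card G.E := by
        rw [MG.card_eq_sum_outdeg]
        have hle : ∑ _w : G.V, 2 ≤ ∑ w : G.V, G.outdeg w :=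
          Finset.sum_le_sum (fun w _ => h2deg w)
        simpa [Finset.sum_const, mul_comm] using hle
      refine ⟨0, fun _ => G, rfl, fun i hi => absurd hi (by omega), hE, rfl, ?_⟩
      show Fintype.card G.E ≤ 2 * (Fintype.card G.E - Fintype.card G.V)
      omega

theorem stmt17 (G : MG)
    (hscc2 : ∀ w : G.V, 2 ≤ Set.ncard {w' : G.V | G.Reach w w' ∧ G.Reach w' w})
    (hnotall1 : ∀ w : G.V, ∃ w', G.Reach w w' ∧ G.Reach w' w ∧ G.outdeg w' ≠ 1) :
    ∃ (n : ℕ) (seq : ℕ → MG), seq 0 = G ∧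
      (∀ i < n, IsContraction (seq i) (seq (i + 1))) ∧
      2 * Fintype.card (seq n).V ≤ Fintype.card (seq n).E ∧
      Fintype.card (seq n).E - Fintype.card (seq n).V
        = Fintype.card G.E - Fintype.card G.V ∧
      Fintype.card (seq n).E ≤ 2 * (Fintype.card G.E - Fintype.card G.V) := by
  have h1 : ∀ w : G.V, 1 ≤ G.outdeg w := by
    intro w
    have h2 := hscc2 w
    have hfin : {w' : G.V | G.Reach w w' ∧ G.Reach w' w}.Finite := Set.toFinite _
    have hlt : 1 < Set.ncard {w' : G.V | G.Reach w w' ∧ G.Reach w' w} := h2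
    rw [Set.one_lt_ncard hfin] at hlt
    obtain ⟨a, ha, b, hb, hab⟩ := hlt
    -- one of a, b differs from w
    have : ∃ x, x ≠ w ∧ G.Reach w x := by
      by_cases haw : a = w
      · exact ⟨b, fun h => hab (haw.trans h.symm), hb.1⟩
      · exact ⟨a, haw, ha.1⟩
    obtain ⟨x, hxw, hwx⟩ := this
    rcases Relation.ReflTransGen.cases_head hwx with h | ⟨c, hstep, _⟩
    · exact absurd h.symm hxw
    · obtain ⟨e, he, _⟩ := hstep
      unfold MG.outdeg
      have : 0 < Set.ncard {e : G.E | G.src e = w} :=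
        (Set.ncard_pos (Set.toFinite _)).mpr ⟨e, he⟩
      omega
  exact aux_main (Fintype.card G.V) G le_rfl h1 hnotall1
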